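/- Let A be SPD with eigenvalues in (0,1] and largest eigenvalue Λ_N, and let r₁, r₂ satisfy |r_i(t) - t^{1-α_i}| ≤ E_i on (0,1] with r_i(Λ_N) - Λ_N^{1-α_i} = -E_i (the error attains -E_i at Λ_N), where α₁ + α₂ = α < 1. Then for f = Ψ_N an eigenvector for Λ_N, the two-step approximation u₂ = r₁(A) r₂(A) A^{-2} f satisfies ‖u₂ - A^{-α} f‖_A / ‖f‖_{A^{-1}} = | (Λ_N^{1-α₁} - E₁)(Λ_N^{1-α₂} - E₂) Λ_N^{-1} - Λ_N^{1-α} |, which equals E₁ + E₂ - E₁E₂ when Λ_N = 1. -/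

import Mathlib

open Matrix Real

/-- Spectral real power of an SPD matrix given by `A = W D Wᵀ`: `A^γ := W D^γ Wᵀ`. -/
noncomputable def matPow {N : ℕ} (W : Matrix (Fin N) (Fin N) ℝ) (D : Fin N → ℝ) (γ : ℝ) :
    Matrix (Fin N) (Fin N) ℝ :=
  W * Matrix.diagonal (fun i => D i ^ γ) * Wᵀ

/-- Spectral application of a scalar function `r` to `A = W D Wᵀ`: `r(A) := W r(D) Wᵀ`. -/
noncomputable def matFun {N : ℕ} (W : Matrix (Fin N) (Fin N) ℝ) (D : Fin N → ℝ) (r : ℝ → ℝ) :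
    Matrix (Fin N) (Fin N) ℝ :=
  W * Matrix.diagonal (fun i => r (D i)) * Wᵀ

/-- The norm `‖v‖_{A^γ} = sqrt (vᵀ A^γ v)`. -/
noncomputable def wnorm {N : ℕ} (W : Matrix (Fin N) (Fin N) ℝ) (D : Fin N → ℝ) (γ : ℝ)
    (v : Fin N → ℝ) : ℝ :=
  Real.sqrt (v ⬝ᵥ (matPow W D γ).mulVec v)

/-- On the top eigenvector `f = Ψ_N` (eigenvalue `Λ_N`), the two-step approximation
`u₂ = r₁(A) r₂(A) A^{-2} f` of `A^{-α} f`, where the errors of `r₁, r₂` attain `-E₁, -E₂`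
at `Λ_N`, satisfies `‖u₂ - A^{-α}f‖_A / ‖f‖_{A^{-1}} =
|(Λ_N^{1-α₁} - E₁)(Λ_N^{1-α₂} - E₂) Λ_N^{-1} - Λ_N^{1-α}|`, which equals
`E₁ + E₂ - E₁E₂` when `Λ_N = 1`. -/
lemma aux_key {N : ℕ} (W : Matrix (Fin N) (Fin N) ℝ) (hW : Wᵀ * W = 1) (i0 : Fin N)
    (g : Fin N → ℝ) :
    (W * Matrix.diagonal g * Wᵀ).mulVec (W.mulVec (Pi.single i0 1)) =
      g i0 • W.mulVec (Pi.single i0 1) := by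
  rw [mulVec_mulVec, Matrix.mul_assoc, Matrix.mul_assoc, hW, Matrix.mul_one,
    ← mulVec_mulVec, diagonal_mulVec_single, mul_one,
    show Pi.single i0 (g i0) = g i0 • (Pi.single i0 (1:ℝ) : Fin N → ℝ) by
      ext j; by_cases h : j = i0 <;> simp [Pi.single_apply, h],
    mulVec_smul]

lemma aux_dot {N : ℕ} (W : Matrix (Fin N) (Fin N) ℝ) (hW : Wᵀ * W = 1) (i0 : Fin N) :
    (W.mulVec (Pi.single i0 1)) ⬝ᵥ (W.mulVec (Pi.single i0 1)) = 1 := by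
  rw [dotProduct_mulVec, ← vecMul_transpose, vecMul_vecMul, hW, vecMul_one]
  simp

theorem stmt19 {N : ℕ} (W : Matrix (Fin N) (Fin N) ℝ) (D : Fin N → ℝ)
    (hW : Wᵀ * W = 1) (hD : ∀ i, 0 < D i) (hD1 : ∀ i, D i ≤ 1)
    (i0 : Fin N) (ΛN : ℝ) (hi0 : D i0 = ΛN) (hmax : ∀ i, D i ≤ ΛN)
    (α₁ α₂ E₁ E₂ : ℝ) (hα₁ : 0 < α₁) (hα₂ : 0 < α₂) (hα : α₁ + α₂ < 1)
    (hE₁ : E₁ ≤ 1) (hE₂ : E₂ ≤ 1)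
    (r₁ r₂ : ℝ → ℝ)
    (hr₁ : ∀ t ∈ Set.Ioc (0 : ℝ) 1, |r₁ t - t ^ (1 - α₁)| ≤ E₁)
    (hr₂ : ∀ t ∈ Set.Ioc (0 : ℝ) 1, |r₂ t - t ^ (1 - α₂)| ≤ E₂)
    (ha₁ : r₁ ΛN - ΛN ^ (1 - α₁) = -E₁)
    (ha₂ : r₂ ΛN - ΛN ^ (1 - α₂) = -E₂)
    (f : Fin N → ℝ) (hf : f = fun k => W k i0)
    (u₂ : Fin N → ℝ)
    (hu₂ : u₂ = (matFun W D r₁).mulVec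
      ((matFun W D r₂).mulVec ((matPow W D (-2)).mulVec f))) :
    wnorm W D 1 (u₂ - (matPow W D (-(α₁ + α₂))).mulVec f) / wnorm W D (-1) f =
      |(ΛN ^ (1 - α₁) - E₁) * (ΛN ^ (1 - α₂) - E₂) * ΛN⁻¹ - ΛN ^ (1 - (α₁ + α₂))| ∧
    (ΛN = 1 →
      wnorm W D 1 (u₂ - (matPow W D (-(α₁ + α₂))).mulVec f) / wnorm W D (-1) f =
        E₁ + E₂ - E₁ * E₂) := by
  have hΛ : 0 < ΛN := hi0 ▸ hD i0
  have hfe : f = W.mulVec (Pi.single i0 1) := by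
    rw [hf]; ext k; simp [mulVec_single]
  have key : ∀ g : Fin N → ℝ,
      (W * Matrix.diagonal g * Wᵀ).mulVec f = g i0 • f := by
    intro g; rw [hfe]; exact aux_key W hW i0 g
  have hff : f ⬝ᵥ f = 1 := by rw [hfe]; exact aux_dot W hW i0
  -- u₂ and the error vector as multiples of f
  set s : ℝ := r₁ ΛN * r₂ ΛN * ΛN ^ (-2 : ℝ) - ΛN ^ (-(α₁ + α₂)) with hs
  have hu₂' : u₂ = (r₁ ΛN * (r₂ ΛN * ΛN ^ (-2 : ℝ))) • f := by
    simp only [hu₂, matPow, matFun, key, mulVec_smul, smul_smul, hi0]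
    congr 1; ring
  have hv : u₂ - (matPow W D (-(α₁ + α₂))).mulVec f = s • f := by
    rw [hu₂', matPow, key, hi0, hs, sub_smul]; ring_nf
  -- wnorms
  have hwn : ∀ (γ : ℝ) (c : ℝ), wnorm W D γ (c • f) = Real.sqrt (c ^ 2 * ΛN ^ γ) := by
    intro γ c
    rw [wnorm, matPow, mulVec_smul, key, hi0, smul_smul, smul_dotProduct,
      dotProduct_smul, hff]
    simp only [smul_eq_mul]; ring_nf
  have hw1 : wnorm W D 1 (u₂ - (matPow W D (-(α₁ + α₂))).mulVec f) = |s| * Real.sqrt ΛN := by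
    rw [hv, hwn, Real.sqrt_mul (sq_nonneg s), Real.sqrt_sq_eq_abs, Real.rpow_one]
  have hw2 : wnorm W D (-1) f = (Real.sqrt ΛN)⁻¹ := by
    have : f = (1 : ℝ) • f := (one_smul ℝ f).symm
    rw [this, hwn, one_pow, one_mul, Real.rpow_neg_one, Real.sqrt_inv]
  have hsqrt : Real.sqrt ΛN ≠ 0 := by positivity
  have hratio : wnorm W D 1 (u₂ - (matPow W D (-(α₁ + α₂))).mulVec f) / wnorm W D (-1) f
      = |s| * ΛN := by
    rw [hw1, hw2, div_eq_mul_inv, inv_inv, mul_assoc, Real.mul_self_sqrt hΛ.le]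
  -- rpow arithmetic
  have hm : ΛN ^ (-2 : ℝ) * ΛN = ΛN⁻¹ := by
    have h := Real.rpow_add hΛ (-2) 1
    rw [Real.rpow_one] at h
    norm_num at h
    rw [Real.rpow_neg_one] at h; rw [h]; norm_num
  have ha : ΛN ^ (-(α₁ + α₂)) * ΛN = ΛN ^ (1 - (α₁ + α₂)) := by
    have h := Real.rpow_add hΛ (-(α₁ + α₂)) 1
    rw [Real.rpow_one, show -(α₁ + α₂) + 1 = 1 - (α₁ + α₂) by ring] at h
    exact h.symm
  have hr1 : r₁ ΛN = ΛN ^ (1 - α₁) - E₁ := by linarith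
  have hr2 : r₂ ΛN = ΛN ^ (1 - α₂) - E₂ := by linarith
  have hsΛ : s * ΛN = (ΛN ^ (1 - α₁) - E₁) * (ΛN ^ (1 - α₂) - E₂) * ΛN⁻¹
      - ΛN ^ (1 - (α₁ + α₂)) := by
    calc s * ΛN = r₁ ΛN * r₂ ΛN * (ΛN ^ (-2 : ℝ) * ΛN) - ΛN ^ (-(α₁ + α₂)) * ΛN := by
          rw [hs]; ring
      _ = _ := by rw [hm, ha, hr1, hr2]
  have hmain : wnorm W D 1 (u₂ - (matPow W D (-(α₁ + α₂))).mulVec f) / wnorm W D (-1) f =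
      |(ΛN ^ (1 - α₁) - E₁) * (ΛN ^ (1 - α₂) - E₂) * ΛN⁻¹ - ΛN ^ (1 - (α₁ + α₂))| := by
    rw [hratio, ← hsΛ, abs_mul, abs_of_pos hΛ]
  refine ⟨hmain, fun h1 => ?_⟩
  have hE₁0 : 0 ≤ E₁ := le_trans (abs_nonneg _) (hr₁ 1 ⟨one_pos, le_refl 1⟩)
  have hE₂0 : 0 ≤ E₂ := le_trans (abs_nonneg _) (hr₂ 1 ⟨one_pos, le_refl 1⟩)
  rw [hmain, h1, Real.one_rpow, Real.one_rpow, Real.one_rpow,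
    show ((1:ℝ) - E₁) * (1 - E₂) * (1:ℝ)⁻¹ - 1 = -(E₁ + E₂ - E₁ * E₂) by ring,
    abs_neg, abs_of_nonneg (by nlinarith)]
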